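/- arXiv:1402.0499 — 7 statements merged into one kernel-verified Lean document; each statement's English description precedes it below -/
import Mathlib

section
/- Let Q be a loop (a type with a binary operation ·, identity 1, and two-sided division making it a quasigroup). Drisko's lemma: for elements f, g, c, d of Q, the principal isotopes Q_{f,g} and Q_{c,d} (with operation x ∘ y = (x/g)·(f\y)) are isomorphic via some bijection θ if and only if there exists an autotopism (α, β, γ) of Q such that fα = c, gβ = d, and (f·g)γ = c·d. -/
/-- A loop: a quasigroup with a two-sided identity. `ldiv a b` is `a \ b`, `rdiv a b` is `a / b`. -/
structure LoopStr (Q : Type*) where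
  mul : Q → Q → Q
  one : Q
  ldiv : Q → Q → Q
  rdiv : Q → Q → Q
  one_mul : ∀ x, mul one x = x
  mul_one : ∀ x, mul x one = x
  mul_ldiv : ∀ a b, mul a (ldiv a b) = b
  ldiv_mul : ∀ a b, ldiv a (mul a b) = b
  rdiv_mul : ∀ a b, mul (rdiv a b) b = a
  mul_rdiv : ∀ a b, rdiv (mul a b) b = a

/-- Operation of the principal isotope `Q_{f,g}` : `x ∘ y = (x / g) · (f \ y)`. -/
def pop {Q : Type*} (L : LoopStr Q) (f g : Q) (x y : Q) : Q :=
  L.mul (L.rdiv x g) (L.ldiv f y)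

/-- Right multiplication by `g` as an equivalence. -/
def mulRightEquiv {Q : Type*} (L : LoopStr Q) (g : Q) : Q ≃ Q where
  toFun x := L.mul x g
  invFun x := L.rdiv x g
  left_inv x := L.mul_rdiv x g
  right_inv x := L.rdiv_mul x g

/-- Left multiplication by `f` as an equivalence. -/
def mulLeftEquiv {Q : Type*} (L : LoopStr Q) (f : Q) : Q ≃ Q where
  toFun x := L.mul f x
  invFun x := L.ldiv f x
  left_inv x := L.ldiv_mul f x
  right_inv x := L.mul_ldiv f x

/-- Drisko's lemma: `Q_{f,g} ≅ Q_{c,d}` iff there is an autotopism `(α,β,γ)` of `Q`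
with `fα = c`, `gβ = d` and `(f·g)γ = c·d`. -/
theorem drisko {Q : Type*} (L : LoopStr Q) (f g c d : Q) :
    (∃ θ : Q ≃ Q, ∀ x y, θ (pop L f g x y) = pop L c d (θ x) (θ y)) ↔
    (∃ α β γ : Q ≃ Q, (∀ x y, L.mul (α x) (β y) = γ (L.mul x y)) ∧
      α f = c ∧ β g = d ∧ γ (L.mul f g) = L.mul c d) := by
  constructor
  · rintro ⟨θ, hθ⟩
    refine ⟨((mulRightEquiv L g).trans θ).trans (mulRightEquiv L d).symm,
      ((mulLeftEquiv L f).trans θ).trans (mulLeftEquiv L c).symm, θ, ?_, ?_, ?_, ?_⟩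
    · -- autotopism
      intro x y
      have h := hθ (L.mul x g) (L.mul f y)
      simp only [pop, L.mul_rdiv, L.ldiv_mul] at h
      simpa [mulRightEquiv, mulLeftEquiv, pop] using h.symm
    all_goals {
      -- key: θ (f·g) = c·d
      have key : θ (L.mul f g) = L.mul c d := by
        have h := hθ (L.mul f g) (θ.symm c)
        simp only [pop, L.mul_rdiv, L.mul_ldiv, Equiv.apply_symm_apply] at h
        have hcc : L.ldiv c c = L.one := by
          have := L.ldiv_mul c L.one
          rwa [L.mul_one] at this
        rw [hcc, L.mul_one] at h
        have := L.rdiv_mul (θ (L.mul f g)) d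
        rw [← h] at this
        exact this.symm
      simp [mulRightEquiv, mulLeftEquiv, key, L.mul_rdiv, L.ldiv_mul]
    }
  · rintro ⟨α, β, γ, hauto, hf, hg, hfg⟩
    refine ⟨γ, fun x y => ?_⟩
    have h1 : α (L.rdiv x g) = L.rdiv (γ x) d := by
      have := hauto (L.rdiv x g) g
      rw [L.rdiv_mul, hg] at this
      have h2 := L.mul_rdiv (α (L.rdiv x g)) d
      rw [this] at h2
      exact h2.symm
    have h2 : β (L.ldiv f y) = L.ldiv c (γ y) := by
      have := hauto f (L.ldiv f y)
      rw [L.mul_ldiv, hf] at this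
      have h3 := L.ldiv_mul c (β (L.ldiv f y))
      rw [this] at h3
      exact h3.symm
    have := hauto (L.rdiv x g) (L.ldiv f y)
    rw [h1, h2] at this
    simp [pop, this.symm]
end

section
/- Let Q be a loop and let θ be an isomorphism from the principal isotope Q_{f,g} to Q_{c,d}. Then the triple (R_g θ R_d^{-1}, L_f θ L_c^{-1}, θ) is an autotopism of Q, where R_a is right translation x ↦ x·a and L_a is left translation x ↦ a·x. -/
/-- If `θ : Q_{f,g} → Q_{c,d}` is an isomorphism, then
`(R_g θ R_d⁻¹, L_f θ L_c⁻¹, θ)` is an autotopism of `Q`. -/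
theorem autotopism_of_isotope_iso {Q : Type*} (L : LoopStr Q) (f g c d : Q) (θ : Q ≃ Q)
    (hθ : ∀ x y, θ (pop L f g x y) = pop L c d (θ x) (θ y)) :
    ∀ x y : Q,
      L.mul (L.rdiv (θ (L.mul x g)) d) (L.ldiv c (θ (L.mul f y))) = θ (L.mul x y) := by
  intro x y
  have h := hθ (L.mul x g) (L.mul f y)
  simp only [pop, L.mul_rdiv, L.ldiv_mul] at h
  exact h.symm
end

section
/- Let Q be a quasigroup and let a,b,c,d ∈ Q. The identity map is an isomorphism from the principal isotope Q_{a,b} to Q_{c,d} if and only if c·b and a·d lie in the middle nucleus of Q_{a,b} and a·b = c·d. -/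
/-- A quasigroup with two-sided divisions. -/
structure QuasiStr (Q : Type*) where
  mul : Q → Q → Q
  ldiv : Q → Q → Q
  rdiv : Q → Q → Q
  mul_ldiv : ∀ a b, mul a (ldiv a b) = b
  ldiv_mul : ∀ a b, ldiv a (mul a b) = b
  rdiv_mul : ∀ a b, mul (rdiv a b) b = a
  mul_rdiv : ∀ a b, rdiv (mul a b) b = a

/-- Operation of the principal isotope `Q_{a,b}` : `x ∘ y = (x / b) · (a \ y)`. -/
def qpop {Q : Type*} (L : QuasiStr Q) (a b : Q) (x y : Q) : Q :=
  L.mul (L.rdiv x b) (L.ldiv a y)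

/-- Membership in the middle nucleus of the magma `(Q, ∘)`. -/
def MemMidNucleus {Q : Type*} (op : Q → Q → Q) (n : Q) : Prop :=
  ∀ x y, op (op x n) y = op x (op n y)

/-- Bryant–Schneider: the identity map is an isomorphism `Q_{a,b} → Q_{c,d}` iff
`c·b, a·d ∈ N_μ(Q_{a,b})` and `a·b = c·d`. -/
theorem bryant_schneider {Q : Type*} (L : QuasiStr Q) (a b c d : Q) :
    (∀ x y, qpop L a b x y = qpop L c d x y) ↔
    (MemMidNucleus (qpop L a b) (L.mul c b) ∧ MemMidNucleus (qpop L a b) (L.mul a d) ∧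
      L.mul a b = L.mul c d) := by
  constructor
  · intro h
    refine ⟨?_, ?_, ?_⟩
    · intro x y
      have e1 : qpop L a b x (L.mul c b) = L.mul (L.rdiv x d) b := by
        rw [h]; unfold qpop; rw [L.ldiv_mul]
      have e2 : qpop L a b (L.mul c b) y = L.mul c (L.ldiv a y) := by
        unfold qpop; rw [L.mul_rdiv]
      rw [e1, e2, h x]
      unfold qpop
      rw [L.mul_rdiv, L.ldiv_mul]
    · intro x y
      have e1 : qpop L a b x (L.mul a d) = L.mul (L.rdiv x b) d := by
        unfold qpop; rw [L.ldiv_mul]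
      have e2 : qpop L a b (L.mul a d) y = L.mul a (L.ldiv c y) := by
        rw [h]; unfold qpop; rw [L.mul_rdiv]
      rw [e1, e2, h (L.mul (L.rdiv x b) d)]
      unfold qpop
      rw [L.mul_rdiv, L.ldiv_mul]
    · have key := h (L.mul a b) (L.mul c d)
      simp only [qpop, L.mul_rdiv, L.ldiv_mul, L.mul_ldiv, L.rdiv_mul] at key
      exact key.symm
  · rintro ⟨h1, h2, h3⟩ x y
    -- p = (a·d)/b, q = a\(c·b)
    have star1 : ∀ u v, L.mul (L.rdiv (L.mul u d) b) v
        = L.mul u (L.ldiv a (L.mul (L.rdiv (L.mul a d) b) v)) := by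
      intro u v
      have t := h2 (L.mul u b) (L.mul a v)
      simp only [qpop, L.mul_rdiv, L.ldiv_mul] at t
      exact t
    have star2 : ∀ u v, L.mul (L.rdiv (L.mul u (L.ldiv a (L.mul c b))) b) v
        = L.mul u (L.ldiv a (L.mul c v)) := by
      intro u v
      have t := h1 (L.mul u b) (L.mul a v)
      simp only [qpop, L.mul_rdiv, L.ldiv_mul] at t
      exact t
    have k1 : L.rdiv (L.mul (L.rdiv (L.mul a d) b) (L.ldiv a (L.mul c b))) b = a := by
      have t := star2 (L.rdiv (L.mul a d) b) d
      rw [← h3, L.ldiv_mul, L.rdiv_mul] at t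
      -- t : mul (rdiv (mul p q) b) d = mul a d
      have := congrArg (fun z => L.rdiv z d) t
      simpa only [L.mul_rdiv] using this
    have star4 : ∀ z, L.mul (L.rdiv (L.mul a d) b) (L.ldiv a z) = L.mul a (L.ldiv c z) := by
      intro z
      have t := star2 (L.rdiv (L.mul a d) b) (L.ldiv c z)
      rw [k1, L.mul_ldiv] at t
      exact t.symm
    have t := star1 (L.rdiv x d) (L.ldiv a y)
    rw [L.rdiv_mul, star4, L.ldiv_mul] at t
    exact t
end

section
/- Every Osborn loop of exponent 2 is an abelian group (a Boolean group). -/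
/-- Every Osborn loop of exponent 2 is an abelian group (a Boolean group).
Here `x^λ = 1 / x` is the left inverse of `x`. -/
theorem osborn_exp_two_abelian_group {Q : Type*} (L : LoopStr Q)
    (osborn : ∀ x y z, L.mul (L.mul x (L.mul y z)) x =
      L.mul (L.mul x y) (L.mul (L.mul (L.rdiv L.one x) (L.mul x z)) x))
    (exp2 : ∀ x, L.mul x x = L.one) :
    (∀ x y, L.mul x y = L.mul y x) ∧
    (∀ x y z, L.mul (L.mul x y) z = L.mul x (L.mul y z)) := by
  have hrd1 : ∀ x, L.rdiv L.one x = x := fun x => by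
    have h := L.mul_rdiv x x; rwa [exp2 x] at h
  have O : ∀ x y z, L.mul (L.mul x (L.mul y z)) x =
      L.mul (L.mul x y) (L.mul (L.mul x (L.mul x z)) x) := fun x y z => by
    have h := osborn x y z; rwa [hrd1] at h
  have lcan : ∀ x a b, L.mul x a = L.mul x b → a = b := fun x a b h => by
    have h2 := congrArg (L.ldiv x) h
    rwa [L.ldiv_mul, L.ldiv_mul] at h2
  have G : ∀ x y, L.mul (L.mul x (L.mul x y)) x = L.mul x y := fun x y => by
    have h := O x y y
    rw [exp2 y, L.mul_one, exp2 x] at h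
    exact (lcan (L.mul x y) _ _ ((exp2 (L.mul x y)).trans h)).symm
  have A2 : ∀ x z, L.mul (L.mul x z) x = L.mul x (L.mul x z) := fun x z => by
    have h := O x L.one z
    rw [L.one_mul, L.mul_one, G x z] at h
    exact h
  have comm : ∀ w x, L.mul w x = L.mul x w := fun w x => by
    have h := A2 x (L.ldiv x w)
    rwa [L.mul_ldiv] at h
  have LIP : ∀ x y, L.mul x (L.mul x y) = y := fun x y => by
    have h : L.mul x (L.mul x (L.mul x y)) = L.mul x y :=
      (comm (L.mul x (L.mul x y)) x).symm.trans (G x y)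
    exact lcan x _ _ h
  have K : ∀ x y z, L.mul y z = L.mul (L.mul x y) (L.mul x z) := fun x y z => by
    have h := O x y z
    rw [LIP x z, comm (L.mul x (L.mul y z)) x, LIP x (L.mul y z), comm z x] at h
    exact h
  have rule : ∀ a b w, L.mul (L.mul a b) w = L.mul b (L.mul a w) := fun a b w => by
    have h := K a b (L.mul a w)
    rw [LIP a w] at h
    exact h.symm
  exact ⟨comm, fun x y z => by rw [comm x y]; exact rule y x z⟩
end

section
/- In any loop Q, the set BS₂(Q) of bijections θ of Q such that θ is an isomorphism from some principal isotope Q_{a,b} to some principal isotope Q_{c,d} forms a group under composition (the second Bryant–Schneider group). -/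
/-- Key lemma: if `θ` is an isomorphism `Q_{e,f} → Q_{g,h}`, then it is also an isomorphism
from `(Q_{e,f})_{u,v} = Q_{u/f, e\v}` to `(Q_{g,h})_{θu,θv} = Q_{θu/h, g\θv}`. -/
lemma pop_iso_shift {Q : Type*} (L : LoopStr Q) (θ : Q → Q) (e f g h : Q)
    (hθ : ∀ x y : Q, θ (pop L e f x y) = pop L g h (θ x) (θ y)) (u v x y : Q) :
    θ (pop L (L.rdiv u f) (L.ldiv e v) x y)
      = pop L (L.rdiv (θ u) h) (L.ldiv g (θ v)) (θ x) (θ y) := by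
  set X := L.mul (L.rdiv x (L.ldiv e v)) f with hX
  set Y := L.mul e (L.ldiv (L.rdiv u f) y) with hY
  have h1 : pop L (L.rdiv u f) (L.ldiv e v) x y = pop L e f X Y := by
    simp [pop, hX, hY, L.mul_rdiv, L.ldiv_mul]
  have hx : x = pop L e f X v := by
    simp [pop, hX, L.mul_rdiv, L.rdiv_mul]
  have hy : y = pop L e f u Y := by
    simp [pop, hY, L.ldiv_mul, L.mul_ldiv]
  have hθx : θ x = L.mul (L.rdiv (θ X) h) (L.ldiv g (θ v)) := by
    rw [hx, hθ]; rfl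
  have hθy : θ y = L.mul (L.rdiv (θ u) h) (L.ldiv g (θ Y)) := by
    rw [hy, hθ]; rfl
  have e1 : L.rdiv (θ x) (L.ldiv g (θ v)) = L.rdiv (θ X) h := by
    rw [hθx, L.mul_rdiv]
  have e2 : L.ldiv (L.rdiv (θ u) h) (θ y) = L.ldiv g (θ Y) := by
    rw [hθy, L.ldiv_mul]
  calc θ (pop L (L.rdiv u f) (L.ldiv e v) x y)
      = θ (pop L e f X Y) := by rw [h1]
    _ = pop L g h (θ X) (θ Y) := hθ X Y
    _ = pop L (L.rdiv (θ u) h) (L.ldiv g (θ v)) (θ x) (θ y) := by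
        simp [pop, e1, e2]

/-- The second Bryant–Schneider group: the bijections of `Q` that are isomorphisms from
some principal isotope `Q_{a,b}` onto some principal isotope `Q_{c,d}` form a subgroup of
the symmetric group of `Q`. -/
theorem second_bryant_schneider_group {Q : Type*} (L : LoopStr Q) :
    ∃ G : Subgroup (Equiv.Perm Q), ∀ θ : Equiv.Perm Q,
      θ ∈ G ↔ ∃ a b c d : Q, ∀ x y : Q, θ (pop L a b x y) = pop L c d (θ x) (θ y) := by
  refine ⟨{
    carrier := {θ : Equiv.Perm Q |
      ∃ a b c d : Q, ∀ x y : Q, θ (pop L a b x y) = pop L c d (θ x) (θ y)}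
    one_mem' := ⟨L.one, L.one, L.one, L.one, fun x y => rfl⟩
    mul_mem' := ?_
    inv_mem' := ?_ }, fun θ => Iff.rfl⟩
  · rintro θ φ ⟨e, f, g, h, hθ⟩ ⟨a, b, c, d, hφ⟩
    refine ⟨a, b, L.rdiv (θ (L.mul c f)) h, L.ldiv g (θ (L.mul e d)), fun x y => ?_⟩
    have key := pop_iso_shift L θ e f g h hθ (L.mul c f) (L.mul e d) (φ x) (φ y)
    rw [L.mul_rdiv, L.ldiv_mul] at key
    calc (θ * φ) (pop L a b x y) = θ (pop L c d (φ x) (φ y)) := by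
          rw [Equiv.Perm.mul_apply, hφ]
      _ = _ := by rw [key]; rfl
  · rintro θ ⟨a, b, c, d, hθ⟩
    refine ⟨c, d, a, b, fun x y => ?_⟩
    have := hθ (θ⁻¹ x) (θ⁻¹ y)
    simp only [Equiv.Perm.coe_inv, Equiv.apply_symm_apply] at this
    simp [Equiv.Perm.inv_def, ← this]
end

section
/- Let Q be a loop, and for x,u,v ∈ Q define φ₀(x,u,v) = u\(((u·v)/(u\(x·v)))·v). Then φ₀(x,u,v) = u\(x·v) for all x,u,v if and only if x\(u·v) = u\(x·v) for all x,u,v. -/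
/-- `φ₀(x,u,v) = u \ (((u·v)/(u\(x·v)))·v)`. -/
def phi0 {Q : Type*} (L : LoopStr Q) (x u v : Q) : Q :=
  L.ldiv u (L.mul (L.rdiv (L.mul u v) (L.ldiv u (L.mul x v))) v)

/-- `φ₀(x,u,v) = u\(x·v)` for all `x,u,v` iff `x\(u·v) = u\(x·v)` for all `x,u,v`. -/
theorem phi0_eq_iff {Q : Type*} (L : LoopStr Q) :
    (∀ x u v, phi0 L x u v = L.ldiv u (L.mul x v)) ↔
    (∀ x u v, L.ldiv x (L.mul u v) = L.ldiv u (L.mul x v)) := by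
  constructor
  · intro h x u v
    have h1 : L.mul (L.rdiv (L.mul u v) (L.ldiv u (L.mul x v))) v = L.mul x v := by
      have := congrArg (L.mul u) (h x u v)
      simpa [phi0, L.mul_ldiv] using this
    have h2 : L.rdiv (L.mul u v) (L.ldiv u (L.mul x v)) = x := by
      have := congrArg (fun t => L.rdiv t v) h1
      simpa [L.mul_rdiv] using this
    have h3 : L.mul x (L.ldiv u (L.mul x v)) = L.mul u v := by
      have := L.rdiv_mul (L.mul u v) (L.ldiv u (L.mul x v))
      rw [h2] at this; exact this
    calc L.ldiv x (L.mul u v) = L.ldiv x (L.mul x (L.ldiv u (L.mul x v))) := by rw [h3]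
      _ = L.ldiv u (L.mul x v) := L.ldiv_mul _ _
  · intro h x u v
    unfold phi0
    rw [← h x u v]
    have : L.rdiv (L.mul u v) (L.ldiv x (L.mul u v)) = x := by
      have key := L.mul_rdiv x (L.ldiv x (L.mul u v))
      rw [L.mul_ldiv] at key; exact key
    rw [this, h x u v]
end

section
/- Let Q be a loop with the property that for all x,u,v ∈ Q, the principal isotopes Q_{u, φ₀(x,u,v)} and Q_{u, u\(x·v)} are equal as magmas (not merely isomorphic), where φ₀(x,u,v) = u\(((u·v)/(u\(x·v)))·v). If Q is also an Osborn loop, then Q is a Boolean group (abelian group of exponent 2). -/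
/-- If in an Osborn loop the principal isotopes `Q_{u,φ₀(x,u,v)}` and `Q_{u,u\(x·v)}`
are equal as magmas for all `x,u,v`, then the loop is a Boolean group. -/
theorem boolean_group_of_equal_isotopes {Q : Type*} (L : LoopStr Q)
    (osborn : ∀ x y z, L.mul (L.mul x (L.mul y z)) x =
      L.mul (L.mul x y) (L.mul (L.mul (L.rdiv L.one x) (L.mul x z)) x))
    (heq : ∀ x u v a b, pop L u (phi0 L x u v) a b = pop L u (L.ldiv u (L.mul x v)) a b) :
    (∀ x y, L.mul x y = L.mul y x) ∧
    (∀ x y z, L.mul (L.mul x y) z = L.mul x (L.mul y z)) ∧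
    (∀ x, L.mul x x = L.one) := by
  have ldiv_self : ∀ a, L.ldiv a a = L.one := fun a => by
    have h := L.ldiv_mul a L.one; rwa [L.mul_one] at h
  have ldiv_one : ∀ b, L.ldiv L.one b = b := fun b => by
    have h := L.mul_ldiv L.one b; rwa [L.one_mul] at h
  -- from heq, phi0 L x u v = u \ (x·v)
  have hg : ∀ x u v, phi0 L x u v = L.ldiv u (L.mul x v) := by
    intro x u v
    set g1 := phi0 L x u v with hg1
    set g2 := L.ldiv u (L.mul x v) with hg2
    have h1 : ∀ a, L.rdiv a g1 = L.rdiv a g2 := by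
      intro a
      have h := heq x u v a u
      simp only [pop, ldiv_self, L.mul_one] at h
      exact h
    have h2 := h1 (L.mul L.one g1)
    rw [L.mul_rdiv] at h2
    -- h2 : 1 = rdiv (1·g1) g2
    have h3 := congrArg (fun t => L.mul t g2) h2
    simp only [L.rdiv_mul] at h3
    -- h3 : mul 1 g2 = mul 1 g1
    rw [L.one_mul, L.one_mul] at h3
    exact h3.symm
  -- key identity: u \ (x·v) = x \ (u·v)
  have key : ∀ x u v, L.ldiv u (L.mul x v) = L.ldiv x (L.mul u v) := by
    intro x u v
    have h := hg x u v
    unfold phi0 at h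
    have h2 := congrArg (L.mul u) h
    rw [L.mul_ldiv, L.mul_ldiv] at h2
    -- h2 : mul (rdiv (uv) (u\(xv))) v = xv
    have h3 := congrArg (fun t => L.rdiv t v) h2
    simp only [L.mul_rdiv] at h3
    -- h3 : rdiv (uv) (u\(xv)) = x
    have h4 := congrArg (fun t => L.mul t (L.ldiv u (L.mul x v))) h3
    simp only [L.rdiv_mul] at h4
    -- h4 : uv = mul x (u\(xv))
    have h5 := congrArg (L.ldiv x) h4
    rw [L.ldiv_mul] at h5
    exact h5.symm ▸ rfl
  -- hence ldiv = mul
  have ldiv_eq : ∀ u v, L.ldiv u v = L.mul u v := by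
    intro u v
    have h := key L.one u v
    rwa [L.one_mul, ldiv_one] at h
  -- commutativity
  have comm : ∀ x y, L.mul x y = L.mul y x := by
    intro x y
    have h := key x y L.one
    rw [L.mul_one, L.mul_one, ldiv_eq, ldiv_eq] at h
    exact h.symm
  -- exchange law: u·(x·v) = x·(u·v)
  have exch : ∀ x u v, L.mul u (L.mul x v) = L.mul x (L.mul u v) := by
    intro x u v
    have h := key x u v
    rwa [ldiv_eq, ldiv_eq] at h
  refine ⟨comm, ?_, ?_⟩
  · intro x y z
    calc L.mul (L.mul x y) z = L.mul z (L.mul x y) := comm _ _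
      _ = L.mul x (L.mul z y) := exch _ _ _
      _ = L.mul x (L.mul y z) := by rw [comm z y]
  · intro x
    have h := ldiv_eq x x
    rw [ldiv_self] at h; exact h.symm
end
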